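/- arXiv:2301.09020 — 5 statements merged into one kernel-verified Lean document; each statement's English description precedes it below -/
import Mathlib

section
/- The censoring product-limit estimator K̂ satisfies the anticipating Volterra integral equation: for every real t with 0 < t < τ, K̂(t) = 1 − ∑_{u ≤ t} K̂(u) · ΔC(u)/Y(u+). -/
open Finset
open scoped Classical

noncomputable section

namespace SurvStmt

/-- The finite set of distinct observed times `{X_1, …, X_n}`. -/
def times {n : ℕ} (X : Fin n → ℝ) : Finset ℝ := Finset.image X Finset.univ

/-- `Y(t) = #{i : X_i ≥ t}`, as a real number. -/
def Yat {n : ℕ} (X : Fin n → ℝ) (t : ℝ) : ℝ :=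
  ((Finset.univ.filter (fun i => t ≤ X i)).card : ℝ)

/-- `Y(t+) = #{i : X_i > t}`, as a real number. -/
def Yplus {n : ℕ} (X : Fin n → ℝ) (t : ℝ) : ℝ :=
  ((Finset.univ.filter (fun i => t < X i)).card : ℝ)

/-- `ΔN(t) = #{i : X_i = t, D_i = 1}`, as a real number. -/
def dN {n : ℕ} (X : Fin n → ℝ) (D : Fin n → Bool) (t : ℝ) : ℝ :=
  ((Finset.univ.filter (fun i => X i = t ∧ D i = true)).card : ℝ)

/-- `ΔC(t) = #{i : X_i = t, D_i = 0}`, as a real number. -/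
def dC {n : ℕ} (X : Fin n → ℝ) (D : Fin n → Bool) (t : ℝ) : ℝ :=
  ((Finset.univ.filter (fun i => X i = t ∧ D i = false)).card : ℝ)

/-- `Y†(t) = Y(t) − ΔN(t)`. -/
def Ydag {n : ℕ} (X : Fin n → ℝ) (D : Fin n → Bool) (t : ℝ) : ℝ :=
  Yat X t - dN X D t

/-- `τ = max_i X_i`, the largest observation time (0 if there is no data). -/
def tau {n : ℕ} (X : Fin n → ℝ) : ℝ := WithBot.unbotD 0 ((times X).max)

/-- Censoring product-limit estimator `K̂(t) = ∏_{u ≤ t} (1 − ΔC(u)/Y†(u))`. -/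
def Khat {n : ℕ} (X : Fin n → ℝ) (D : Fin n → Bool) (t : ℝ) : ℝ :=
  ∏ u ∈ (times X).filter (fun u => u ≤ t), (1 - dC X D u / Ydag X D u)

/-- Left limit `K̂(t−) = ∏_{u < t} (1 − ΔC(u)/Y†(u))`. -/
def Kminus {n : ℕ} (X : Fin n → ℝ) (D : Fin n → Bool) (t : ℝ) : ℝ :=
  ∏ u ∈ (times X).filter (fun u => u < t), (1 - dC X D u / Ydag X D u)

/-- Failure product-limit estimator `Ŝ_PL(t) = ∏_{u ≤ t} (1 − ΔN(u)/Y(u))`. -/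
def SPL {n : ℕ} (X : Fin n → ℝ) (D : Fin n → Bool) (t : ℝ) : ℝ :=
  ∏ u ∈ (times X).filter (fun u => u ≤ t), (1 - dN X D u / Yat X u)

/-- Left limit `Ŝ_PL(t−) = ∏_{u < t} (1 − ΔN(u)/Y(u))`. -/
def SPLminus {n : ℕ} (X : Fin n → ℝ) (D : Fin n → Bool) (t : ℝ) : ℝ :=
  ∏ u ∈ (times X).filter (fun u => u < t), (1 - dN X D u / Yat X u)

/-- IPCW estimator `F̂_IPCW(t) = (1/n) ∑_i D_i 1{X_i ≤ t} / K̂(X_i−)`. -/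
def FIPCW {n : ℕ} (X : Fin n → ℝ) (D : Fin n → Bool) (t : ℝ) : ℝ :=
  (1 / (n : ℝ)) * ∑ i : Fin n,
    (if D i = true then (1 : ℝ) else 0) * (if X i ≤ t then (1 : ℝ) else 0) / Kminus X D (X i)

/-- IPCW survival estimator `S̃_IPCW(t) = (1/n) ∑_i D_i 1{X_i > t} / K̂(X_i−)`. -/
def SIPCW {n : ℕ} (X : Fin n → ℝ) (D : Fin n → Bool) (t : ℝ) : ℝ :=
  (1 / (n : ℝ)) * ∑ i : Fin n,
    (if D i = true then (1 : ℝ) else 0) * (if t < X i then (1 : ℝ) else 0) / Kminus X D (X i)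

/-- RTTR jump weight `J(v) = 1/(n · K̂(v−))`. -/
def Jw {n : ℕ} (X : Fin n → ℝ) (D : Fin n → Bool) (v : ℝ) : ℝ :=
  1 / ((n : ℝ) * Kminus X D v)

/-- Redistribute-to-the-right estimator
`Ŝ_RTTR(t) = 1 − ∑_{v ≤ t} [J(v) ΔN(v) 1{v < τ} + J(τ) Y(τ) 1{v = τ}]`. -/
def SRTTR {n : ℕ} (X : Fin n → ℝ) (D : Fin n → Bool) (t : ℝ) : ℝ :=
  1 - ∑ v ∈ (times X).filter (fun v => v ≤ t),
      (Jw X D v * dN X D v * (if v < tau X then (1 : ℝ) else 0)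
        + Jw X D (tau X) * Yat X (tau X) * (if v = tau X then (1 : ℝ) else 0))

private lemma telescope (f : ℝ → ℝ) (S : Finset ℝ) :
    ∏ u ∈ S, f u
      = 1 - ∑ u ∈ S, (∏ v ∈ S.filter (fun v => v < u), f v) * (1 - f u) := by
  induction S using Finset.induction_on_max with
  | empty => simp
  | insert a s ha ih =>
    have has : a ∉ s := fun h => lt_irrefl a (ha a h)
    rw [Finset.prod_insert has, Finset.sum_insert has]
    have h1 : (insert a s).filter (fun v => v < a) = s := by
      ext v
      simp only [Finset.mem_filter, Finset.mem_insert]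
      constructor
      · rintro ⟨hv | hv, hlt⟩
        · exact absurd hlt (by simp [hv])
        · exact hv
      · exact fun hv => ⟨Or.inr hv, ha v hv⟩
    have h2 : ∀ u ∈ s, (insert a s).filter (fun v => v < u)
        = s.filter (fun v => v < u) := by
      intro u hu
      ext v
      simp only [Finset.mem_filter, Finset.mem_insert]
      constructor
      · rintro ⟨hv | hv, hlt⟩
        · exact absurd (hv ▸ hlt) (asymm (ha u hu))
        · exact ⟨hv, hlt⟩
      · rintro ⟨hv, hlt⟩; exact ⟨Or.inr hv, hlt⟩
    rw [h1, Finset.sum_congr rfl (fun u hu => by rw [h2 u hu]), ih]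
    ring

private lemma count_split {n : ℕ} (X : Fin n → ℝ) (D : Fin n → Bool) (u : ℝ) :
    Yat X u = Yplus X u + dN X D u + dC X D u := by
  unfold Yat Yplus dN dC
  have e1 : (Finset.univ.filter fun i : Fin n => u ≤ X i)
      = (Finset.univ.filter fun i => u < X i)
        ∪ ((Finset.univ.filter fun i => X i = u ∧ D i = true)
          ∪ (Finset.univ.filter fun i => X i = u ∧ D i = false)) := by
    ext i
    simp only [Finset.mem_filter, Finset.mem_union, Finset.mem_univ, true_and]
    constructor
    · intro h
      rcases lt_or_eq_of_le h with h' | h'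
      · exact Or.inl h'
      · cases hD : D i
        · exact Or.inr (Or.inr ⟨h'.symm, rfl⟩)
        · exact Or.inr (Or.inl ⟨h'.symm, rfl⟩)
    · rintro (h | ⟨h, _⟩ | ⟨h, _⟩)
      · exact h.le
      · exact h.ge
      · exact h.ge
  have d1 : Disjoint (Finset.univ.filter fun i : Fin n => u < X i)
      ((Finset.univ.filter fun i => X i = u ∧ D i = true)
        ∪ (Finset.univ.filter fun i => X i = u ∧ D i = false)) := by
    rw [Finset.disjoint_left]
    intro i hi hi'
    simp only [Finset.mem_filter, Finset.mem_union, Finset.mem_univ, true_and] at hi hi'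
    rcases hi' with ⟨h, _⟩ | ⟨h, _⟩ <;> exact absurd (h ▸ hi) (lt_irrefl u)
  have d2 : Disjoint (Finset.univ.filter fun i : Fin n => X i = u ∧ D i = true)
      (Finset.univ.filter fun i => X i = u ∧ D i = false) := by
    rw [Finset.disjoint_left]
    intro i hi hi'
    simp only [Finset.mem_filter, Finset.mem_univ, true_and] at hi hi'
    rw [hi.2] at hi'
    exact absurd hi'.2 (by simp)
  rw [e1, Finset.card_union_of_disjoint d1, Finset.card_union_of_disjoint d2]
  push_cast
  ring

/-- `K̂` satisfies the anticipating Volterra equation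
`K̂(t) = 1 − ∑_{u ≤ t} K̂(u) ΔC(u)/Y(u+)` for `0 < t < τ`. -/
theorem stmt1 (n : ℕ) (hn : 0 < n) (X : Fin n → ℝ) (D : Fin n → Bool)
    (hX : ∀ i, 0 < X i) :
    ∀ t : ℝ, 0 < t → t < tau X →
      Khat X D t
        = 1 - ∑ u ∈ (times X).filter (fun u => u ≤ t),
            Khat X D u * dC X D u / Yplus X u := by
  intro t ht htτ
  have hne : (times X).Nonempty :=
    ⟨X ⟨0, hn⟩, Finset.mem_image.2 ⟨⟨0, hn⟩, Finset.mem_univ _, rfl⟩⟩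
  obtain ⟨j, hj⟩ : ∃ j, X j = tau X := by
    have hmem : tau X ∈ times X := by
      rcases Finset.max_of_nonempty hne with ⟨m, hm⟩
      have : tau X = m := by rw [tau, hm]; rfl
      rw [this]
      exact Finset.mem_of_max hm
    rcases Finset.mem_image.1 hmem with ⟨j, _, hj⟩
    exact ⟨j, hj⟩
  set f : ℝ → ℝ := fun v => 1 - dC X D v / Ydag X D v with hf
  set S : Finset ℝ := (times X).filter (fun u => u ≤ t) with hS
  have key : ∀ u ∈ S,
      (∏ v ∈ S.filter (fun v => v < u), f v) * (1 - f u)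
        = Khat X D u * dC X D u / Yplus X u := by
    intro u hu
    rcases Finset.mem_filter.1 hu with ⟨huX, hut⟩
    -- filtered prefix equals global prefix
    have hpre : S.filter (fun v => v < u) = (times X).filter (fun v => v < u) := by
      rw [hS, Finset.filter_filter]
      apply Finset.filter_congr
      intro v _
      constructor
      · exact fun h => h.2
      · exact fun h => ⟨le_trans h.le hut, h⟩
    -- Khat u splits as Kminus u * f u
    have hsplit : (times X).filter (fun v => v ≤ u)
        = insert u ((times X).filter (fun v => v < u)) := by
      ext v
      simp only [Finset.mem_filter, Finset.mem_insert]
      constructor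
      · rintro ⟨hv, hvu⟩
        rcases lt_or_eq_of_le hvu with h | h
        · exact Or.inr ⟨hv, h⟩
        · exact Or.inl h
      · rintro (h | ⟨hv, hvu⟩)
        · exact ⟨h ▸ huX, h.le⟩
        · exact ⟨hv, hvu.le⟩
    have hKu : Khat X D u = (∏ v ∈ (times X).filter (fun v => v < u), f v) * f u := by
      rw [Khat, hsplit, Finset.prod_insert (by simp), hf]
      ring
    -- positivity
    have hyp : 0 < Yplus X u := by
      have : j ∈ Finset.univ.filter (fun i => u < X i) := by
        simp only [Finset.mem_filter, Finset.mem_univ, true_and]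
        rw [hj]; exact lt_of_le_of_lt hut htτ
      have h := Finset.card_pos.2 ⟨j, this⟩
      rw [Yplus]
      exact_mod_cast h
    have hcs : Ydag X D u = Yplus X u + dC X D u := by
      rw [Ydag, count_split X D u]; ring
    have hdc : 0 ≤ dC X D u := by rw [dC]; positivity
    have hyd : 0 < Ydag X D u := by rw [hcs]; linarith
    rw [hpre, hKu, hf]
    have hyp' : Yplus X u ≠ 0 := ne_of_gt hyp
    have hyd' : Ydag X D u ≠ 0 := ne_of_gt hyd
    field_simp
    ring_nf
    rw [hcs]
    ring
  rw [show Khat X D t = ∏ u ∈ S, f u from rfl, telescope, Finset.sum_congr rfl key]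

end SurvStmt
end
end

section
/- Suppose that ΔN(u) · ΔC(u) = 0 for every observed time u < τ (no common discontinuities of failure and censoring before the last observation time). Then for every real t with 0 < t < τ, K̂(t) = ∏_{u ≤ t} (1 − ΔC(u)/Y(u)), and moreover K̂ satisfies the non-anticipating Volterra integral equation K̂(t) = 1 − ∑_{u ≤ t} K̂(u−) · ΔC(u)/Y(u). -/
open Finset
open scoped Classical

noncomputable section

namespace SurvStmt

lemma prod_eq_one_add_sum (S : Finset ℝ) (f : ℝ → ℝ) :
    ∏ u ∈ S, f u = 1 + ∑ u ∈ S, (∏ v ∈ S.filter (fun v => v < u), f v) * (f u - 1) := by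
  induction S using Finset.induction_on_max with
  | empty => simp
  | insert a s ha ih =>
    have hna : a ∉ s := fun h => lt_irrefl a (ha a h)
    rw [Finset.prod_insert hna, Finset.sum_insert hna]
    have h1 : (insert a s).filter (fun v => v < a) = s := by
      rw [Finset.filter_insert]
      simp only [lt_irrefl, if_false]
      exact Finset.filter_true_of_mem (fun x hx => ha x hx)
    have h2 : ∀ u ∈ s, (insert a s).filter (fun v => v < u) = s.filter (fun v => v < u) := by
      intro u hu
      rw [Finset.filter_insert, if_neg (not_lt.2 (ha u hu).le)]
    rw [h1, Finset.sum_congr rfl (fun u hu => by rw [h2 u hu])]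
    have hs : ∑ u ∈ s, (∏ v ∈ s.filter (fun v => v < u), f v) * (f u - 1)
        = ∏ u ∈ s, f u - 1 := by rw [ih]; ring
    rw [hs]; ring

/-- if `ΔN(u) ΔC(u) = 0` for every observed time `u < τ`, then for `0 < t < τ`,
`K̂(t) = ∏_{u ≤ t} (1 − ΔC(u)/Y(u))` and `K̂(t) = 1 − ∑_{u ≤ t} K̂(u−) ΔC(u)/Y(u)`. -/
theorem stmt3 (n : ℕ) (hn : 0 < n) (X : Fin n → ℝ) (D : Fin n → Bool)
    (hX : ∀ i, 0 < X i)
    (hnc : ∀ u ∈ times X, u < tau X → dN X D u * dC X D u = 0) :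
    ∀ t : ℝ, 0 < t → t < tau X →
      (Khat X D t = ∏ u ∈ (times X).filter (fun u => u ≤ t), (1 - dC X D u / Yat X u))
      ∧ (Khat X D t
          = 1 - ∑ u ∈ (times X).filter (fun u => u ≤ t),
              Kminus X D u * dC X D u / Yat X u) := by
  intro t ht htt
  -- key pointwise fact
  have key : ∀ u ∈ (times X).filter (fun u => u ≤ t),
      dC X D u / Ydag X D u = dC X D u / Yat X u := by
    intro u hu
    rw [Finset.mem_filter] at hu
    have h := hnc u hu.1 (lt_of_le_of_lt hu.2 htt)
    rcases mul_eq_zero.mp h with h | h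
    · unfold Ydag; rw [h, sub_zero]
    · rw [h]; simp
  have part1 : Khat X D t
      = ∏ u ∈ (times X).filter (fun u => u ≤ t), (1 - dC X D u / Yat X u) := by
    unfold Khat
    exact Finset.prod_congr rfl (fun u hu => by rw [key u hu])
  refine ⟨part1, ?_⟩
  have hK : ∀ u ∈ (times X).filter (fun u => u ≤ t),
      (∏ v ∈ ((times X).filter (fun u => u ≤ t)).filter (fun v => v < u),
        (1 - dC X D v / Ydag X D v)) = Kminus X D u := by
    intro u hu
    rw [Finset.mem_filter] at hu
    unfold Kminus
    congr 1
    rw [Finset.filter_filter]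
    apply Finset.filter_congr
    intro v hv
    constructor
    · exact fun h => h.2
    · exact fun h => ⟨le_trans h.le hu.2, h⟩
  have := prod_eq_one_add_sum ((times X).filter (fun u => u ≤ t))
    (fun u => 1 - dC X D u / Ydag X D u)
  unfold Khat
  rw [this]
  rw [Finset.sum_congr rfl (fun u hu => by rw [hK u hu, key u hu])]
  have hsum : ∑ u ∈ (times X).filter (fun u => u ≤ t),
      Kminus X D u * (1 - dC X D u / Yat X u - 1)
      = ∑ u ∈ (times X).filter (fun u => u ≤ t),
        -(Kminus X D u * dC X D u / Yat X u) :=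
    Finset.sum_congr rfl (fun u _ => by ring)
  rw [hsum, Finset.sum_neg_distrib]
  ring


end SurvStmt
end
end

section
/- The failure product-limit estimator solves Efron's self-consistency equation: for every real t with 0 < t < τ, Ŝ_PL(t) = Y(t+)/n + (Ŝ_PL(t)/n) · ∑_{u ≤ t} ΔC(u)/Ŝ_PL(u). -/
open Finset
open scoped Classical

noncomputable section

namespace SurvStmt

section Aux

variable {n : ℕ} (X : Fin n → ℝ) (D : Fin n → Bool)

lemma times_nonempty (hn : 0 < n) : (times X).Nonempty :=
  ⟨X ⟨0, hn⟩, Finset.mem_image_of_mem X (Finset.mem_univ _)⟩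

lemma tau_eq_max' (hn : 0 < n) : tau X = (times X).max' (times_nonempty X hn) := by
  rw [tau, ← Finset.coe_max' (times_nonempty X hn)]
  rfl

lemma tau_mem (hn : 0 < n) : tau X ∈ times X := by
  rw [tau_eq_max' X hn]; exact Finset.max'_mem _ _

lemma le_tau (hn : 0 < n) (i : Fin n) : X i ≤ tau X := by
  rw [tau_eq_max' X hn]
  exact Finset.le_max' _ _ (Finset.mem_image_of_mem X (Finset.mem_univ _))

/-- Count split: `Y(u) = Y(u+) + ΔN(u) + ΔC(u)`. -/
lemma Yat_split (u : ℝ) : Yat X u = Yplus X u + dN X D u + dC X D u := by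
  unfold Yat Yplus dN dC
  have h1 : (Finset.univ.filter (fun i => X i = u ∧ D i = true)).card
      + (Finset.univ.filter (fun i => X i = u ∧ D i = false)).card
      = (Finset.univ.filter (fun i : Fin n => X i = u)).card := by
    have := Finset.card_filter_add_card_filter_not
      (s := Finset.univ.filter (fun i : Fin n => X i = u)) (p := fun i => D i = true)
    rw [Finset.filter_filter, Finset.filter_filter] at this
    simpa using this
  have h2 : (Finset.univ.filter (fun i : Fin n => u < X i)).card
      + (Finset.univ.filter (fun i : Fin n => X i = u)).card
      = (Finset.univ.filter (fun i : Fin n => u ≤ X i)).card := by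
    have := Finset.card_filter_add_card_filter_not
      (s := Finset.univ.filter (fun i : Fin n => u ≤ X i)) (p := fun i => u < X i)
    rw [Finset.filter_filter, Finset.filter_filter] at this
    have e1 : Finset.univ.filter (fun i : Fin n => u ≤ X i ∧ u < X i)
        = Finset.univ.filter (fun i : Fin n => u < X i) := by
      apply Finset.filter_congr; intro i _; constructor
      · exact fun h => h.2
      · exact fun h => ⟨le_of_lt h, h⟩
    have e2 : Finset.univ.filter (fun i : Fin n => u ≤ X i ∧ ¬ u < X i)
        = Finset.univ.filter (fun i : Fin n => X i = u) := by
      apply Finset.filter_congr; intro i _; constructor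
      · exact fun h => le_antisymm (not_lt.mp h.2) h.1
      · intro h; rw [h]; exact ⟨le_refl u, lt_irrefl u⟩
    rw [e1, e2] at this
    exact this
  push_cast [← h1, ← h2]
  ring

lemma dN_nonneg (u : ℝ) : 0 ≤ dN X D u := Nat.cast_nonneg _
lemma dC_nonneg (u : ℝ) : 0 ≤ dC X D u := Nat.cast_nonneg _

lemma Yat_pos_of_mem {u : ℝ} (hu : u ∈ times X) : 0 < Yat X u := by
  obtain ⟨i, _, hi⟩ := Finset.mem_image.mp hu
  have : i ∈ Finset.univ.filter (fun i => u ≤ X i) := by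
    simp [hi.symm.le]
  have h := Finset.card_pos.mpr ⟨i, this⟩
  unfold Yat
  exact_mod_cast h

lemma Yplus_pos_of_lt_tau (hn : 0 < n) {u : ℝ} (hu : u < tau X) : 0 < Yplus X u := by
  obtain ⟨i, _, hi⟩ := Finset.mem_image.mp (tau_mem X hn)
  have : i ∈ Finset.univ.filter (fun i => u < X i) := by
    simp [hi ▸ hu]
  have h := Finset.card_pos.mpr ⟨i, this⟩
  unfold Yplus
  exact_mod_cast h

/-- Each Kaplan–Meier factor is positive strictly before `τ`. -/
lemma factor_pos (hn : 0 < n) {u : ℝ} (hu : u ∈ times X) (hut : u < tau X) :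
    0 < 1 - dN X D u / Yat X u := by
  have hY : 0 < Yat X u := Yat_pos_of_mem X hu
  have hsplit := Yat_split X D u
  have hYp := Yplus_pos_of_lt_tau X hn hut
  have hdC := dC_nonneg X D u
  rw [sub_pos, div_lt_one hY]
  linarith

lemma SPL_pos (hn : 0 < n) {t : ℝ} (ht : t < tau X) : 0 < SPL X D t := by
  unfold SPL
  apply Finset.prod_pos
  intro u hu
  rw [Finset.mem_filter] at hu
  exact factor_pos X D hn hu.1 (lt_of_le_of_lt hu.2 ht)

/-- Main induction: unnormalized Efron self-consistency for all `t < τ`. -/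
lemma main_ind (hn : 0 < n) : ∀ m : ℕ, ∀ t : ℝ, t < tau X →
    ((times X).filter (fun u => u ≤ t)).card = m →
    (n : ℝ) * SPL X D t = Yplus X t
      + SPL X D t * ∑ u ∈ (times X).filter (fun u => u ≤ t), dC X D u / SPL X D u := by
  intro m
  induction m using Nat.strong_induction_on with
  | _ m IH =>
  intro t ht hcard
  by_cases hS : ((times X).filter (fun u => u ≤ t)).Nonempty
  case neg =>
    -- no observed times ≤ t
    rw [Finset.not_nonempty_iff_eq_empty] at hS
    have hSPL : SPL X D t = 1 := by unfold SPL; rw [hS, Finset.prod_empty]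
    have hYp : Yplus X t = (n : ℝ) := by
      unfold Yplus
      have : Finset.univ.filter (fun i : Fin n => t < X i) = Finset.univ := by
        apply Finset.filter_true_of_mem
        intro i _
        by_contra h
        have : X i ∈ (times X).filter (fun u => u ≤ t) := by
          simp [times, Finset.mem_filter, not_lt.mp h]
        rw [hS] at this; exact absurd this (Finset.notMem_empty _)
      rw [this]; simp
    rw [hS, hSPL, hYp]; simp
  case pos =>
    set S := (times X).filter (fun u => u ≤ t) with hSdef
    set s := S.max' hS with hsdef
    have hs_mem : s ∈ S := Finset.max'_mem _ _
    have hs_times : s ∈ times X := (Finset.mem_filter.mp hs_mem).1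
    have hs_le_t : s ≤ t := (Finset.mem_filter.mp hs_mem).2
    have hs_lt_tau : s < tau X := lt_of_le_of_lt hs_le_t ht
    -- transfer from t to s
    have hSa : S = (times X).filter (fun u => u ≤ s) := by
      ext u
      simp only [hSdef, Finset.mem_filter]
      constructor
      · exact fun h => ⟨h.1, Finset.le_max' _ _ (Finset.mem_filter.mpr h)⟩
      · exact fun h => ⟨h.1, le_trans h.2 hs_le_t⟩
    have hYp : Yplus X t = Yplus X s := by
      have hfe : Finset.univ.filter (fun i : Fin n => t < X i)
          = Finset.univ.filter (fun i : Fin n => s < X i) := by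
        ext i
        simp only [Finset.mem_filter, Finset.mem_univ, true_and]
        constructor
        · exact fun h => lt_of_le_of_lt hs_le_t h
        · intro h
          by_contra hle
          have hXi : X i ∈ S := by
            simp [hSdef, times, Finset.mem_filter, not_lt.mp hle]
          exact absurd (Finset.le_max' _ _ hXi) (not_le.mpr h)
      unfold Yplus
      rw [hfe]
    -- split off s
    set T := (times X).filter (fun u => u < s) with hTdef
    have hs_notin_T : s ∉ T := by simp [hTdef]
    have hins : (times X).filter (fun u => u ≤ s) = insert s T := by
      ext u
      simp only [hTdef, Finset.mem_filter, Finset.mem_insert]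
      constructor
      · intro h
        rcases lt_or_eq_of_le h.2 with h' | h'
        · exact Or.inr ⟨h.1, h'⟩
        · exact Or.inl h'
      · rintro (rfl | h)
        · exact ⟨hs_times, le_refl _⟩
        · exact ⟨h.1, le_of_lt h.2⟩
    have hSPLs : SPL X D s = (1 - dN X D s / Yat X s) * ∏ u ∈ T, (1 - dN X D u / Yat X u) := by
      unfold SPL
      rw [hins, Finset.prod_insert hs_notin_T]
    have hSPLts : SPL X D t = SPL X D s := by
      unfold SPL
      rw [← hSa, hSdef]
    have hsum : ∑ u ∈ S, dC X D u / SPL X D u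
        = dC X D s / SPL X D s + ∑ u ∈ T, dC X D u / SPL X D u := by
      rw [hSa, hins, Finset.sum_insert hs_notin_T]
    have hYpos : 0 < Yat X s := Yat_pos_of_mem X hs_times
    have hKpos : 0 < SPL X D s := SPL_pos X D hn hs_lt_tau
    have hsplit := Yat_split X D s
    rw [hSPLts, hYp, hsum]
    by_cases hT : T.Nonempty
    case neg =>
      rw [Finset.not_nonempty_iff_eq_empty] at hT
      rw [hT] at hSPLs
      simp only [Finset.prod_empty, mul_one] at hSPLs
      rw [hT]
      simp only [Finset.sum_empty, add_zero]
      have hYn : Yat X s = (n : ℝ) := by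
        unfold Yat
        have : Finset.univ.filter (fun i : Fin n => s ≤ X i) = Finset.univ := by
          apply Finset.filter_true_of_mem
          intro i _
          by_contra h
          have : X i ∈ T := by
            simp [hTdef, times, Finset.mem_filter, not_le.mp h]
          rw [hT] at this; exact absurd this (Finset.notMem_empty _)
        rw [this]; simp
      have hcancel : SPL X D s * (dC X D s / SPL X D s) = dC X D s := by
        field_simp
      rw [hcancel]
      have hYne : Yat X s ≠ 0 := ne_of_gt hYpos
      rw [hSPLs]
      field_simp
      linear_combination (Yat X s) * hsplit + (dN X D s - Yat X s) * hYn
    case pos =>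
      set t' := T.max' hT with ht'def
      have ht'_mem : t' ∈ T := Finset.max'_mem _ _
      have ht'_lt_s : t' < s := (Finset.mem_filter.mp ht'_mem).2
      have ht'_lt_tau : t' < tau X := lt_trans ht'_lt_s hs_lt_tau
      have hfil : (times X).filter (fun u => u ≤ t') = T := by
        ext u
        simp only [hTdef, Finset.mem_filter]
        constructor
        · exact fun h => ⟨h.1, lt_of_le_of_lt h.2 ht'_lt_s⟩
        · exact fun h => ⟨h.1, Finset.le_max' _ _ (Finset.mem_filter.mpr h)⟩
      have hTcard : T.card < m := by
        rw [← hcard]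
        apply Finset.card_lt_card
        rw [hSa]
        constructor
        · intro u hu
          rw [Finset.mem_filter] at hu ⊢
          exact ⟨hu.1, le_of_lt hu.2⟩
        · intro hsub
          have := hsub (Finset.mem_filter.mpr ⟨hs_times, le_refl s⟩)
          exact hs_notin_T this
      have hIH := IH T.card hTcard t' ht'_lt_tau (by rw [hfil])
      have hSPLt' : SPL X D t' = ∏ u ∈ T, (1 - dN X D u / Yat X u) := by
        unfold SPL; rw [hfil]
      have hYt' : Yplus X t' = Yat X s := by
        have hfe : Finset.univ.filter (fun i : Fin n => t' < X i)
            = Finset.univ.filter (fun i : Fin n => s ≤ X i) := by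
          ext i
          simp only [Finset.mem_filter, Finset.mem_univ, true_and]
          constructor
          · intro h
            by_contra hle
            have hXi : X i ∈ T := by
              simp [hTdef, times, Finset.mem_filter, not_le.mp hle]
            exact absurd (Finset.le_max' _ _ hXi) (not_le.mpr h)
          · exact fun h => lt_of_lt_of_le ht'_lt_s h
        unfold Yplus Yat
        rw [hfe]
      rw [hfil, hSPLt', hYt'] at hIH
      set P := ∏ u ∈ T, (1 - dN X D u / Yat X u) with hPdef
      set Sig := ∑ u ∈ T, dC X D u / SPL X D u with hSigdef
      have hcancel : SPL X D s * (dC X D s / SPL X D s) = dC X D s := by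
        field_simp
      rw [mul_add, hcancel]
      -- goal: n * SPL s = Yplus s + (dC s + SPL s * Sig)
      have hYne : Yat X s ≠ 0 := ne_of_gt hYpos
      rw [hSPLs]
      have key : (n : ℝ) * ((1 - dN X D s / Yat X s) * P)
          = (1 - dN X D s / Yat X s) * ((n : ℝ) * P) := by ring
      rw [key, hIH]
      field_simp
      ring_nf
      nlinarith [hsplit]

end Aux

/-- the failure product-limit estimator solves Efron's self-consistency
equation: for `0 < t < τ`,
`Ŝ_PL(t) = Y(t+)/n + (Ŝ_PL(t)/n) ∑_{u ≤ t} ΔC(u)/Ŝ_PL(u)`. -/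
theorem stmt6 (n : ℕ) (hn : 0 < n) (X : Fin n → ℝ) (D : Fin n → Bool)
    (hX : ∀ i, 0 < X i) :
    ∀ t : ℝ, 0 < t → t < tau X →
      SPL X D t
        = Yplus X t / (n : ℝ)
          + (SPL X D t / (n : ℝ))
            * ∑ u ∈ (times X).filter (fun u => u ≤ t), dC X D u / SPL X D u := by
  intro t _ httau
  have h := main_ind X D hn _ t httau rfl
  have hn' : (n : ℝ) ≠ 0 := Nat.cast_ne_zero.mpr hn.ne'
  field_simp
  linear_combination h

end SurvStmt
end
end

section
/- The failure product-limit estimator satisfies the non-anticipating Volterra integral equation: for every real t > 0, Ŝ_PL(t) = 1 − ∑_{u ≤ t} Ŝ_PL(u−) · ΔN(u)/Y(u). -/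
open Finset
open scoped Classical

noncomputable section

namespace SurvStmt

lemma key_telescope : ∀ (s : Finset ℝ) (g : ℝ → ℝ),
    ∏ u ∈ s, g u = 1 - ∑ u ∈ s, (∏ v ∈ s.filter (fun v => v < u), g v) * (1 - g u) := by
  intro s
  induction s using Finset.strongInduction with
  | _ s ih =>
    intro g
    rcases s.eq_empty_or_nonempty with h | h
    · simp [h]
    · set m := s.max' h with hmdef
      have hm : m ∈ s := s.max'_mem h
      have hle : ∀ b ∈ s, b ≤ m := fun b hb => s.le_max' b hb
      have hins : s = insert m (s.erase m) := (Finset.insert_erase hm).symm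
      have hfm : s.filter (fun v => v < m) = s.erase m := by
        ext v
        simp only [Finset.mem_filter, Finset.mem_erase]
        constructor
        · rintro ⟨hv, hlt⟩; exact ⟨ne_of_lt hlt, hv⟩
        · rintro ⟨hne, hv⟩; exact ⟨hv, lt_of_le_of_ne (hle v hv) hne⟩
      have hfu : ∀ u ∈ s.erase m, s.filter (fun v => v < u)
          = (s.erase m).filter (fun v => v < u) := by
        intro u hu
        have hum : u ≤ m := hle u (Finset.mem_of_mem_erase hu)
        ext v
        simp only [Finset.mem_filter, Finset.mem_erase]
        constructor
        · rintro ⟨hv, hlt⟩; exact ⟨⟨ne_of_lt (lt_of_lt_of_le hlt hum), hv⟩, hlt⟩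
        · rintro ⟨⟨_, hv⟩, hlt⟩; exact ⟨hv, hlt⟩
      have hnm : m ∉ s.erase m := Finset.notMem_erase m s
      have IH := ih (s.erase m) (Finset.erase_ssubset hm) g
      rw [← Finset.mul_prod_erase s g hm,
        ← Finset.add_sum_erase s (fun u => (∏ v ∈ s.filter (fun v => v < u), g v) * (1 - g u)) hm,
        hfm, Finset.sum_congr rfl (fun u hu => by rw [hfu u hu])]
      rw [IH]
      ring

/-- the failure product-limit estimator satisfies the non-anticipating
Volterra equation: for every `t > 0`,
`Ŝ_PL(t) = 1 − ∑_{u ≤ t} Ŝ_PL(u−) ΔN(u)/Y(u)`. -/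
theorem stmt9 (n : ℕ) (hn : 0 < n) (X : Fin n → ℝ) (D : Fin n → Bool)
    (hX : ∀ i, 0 < X i) :
    ∀ t : ℝ, 0 < t →
      SPL X D t
        = 1 - ∑ u ∈ (times X).filter (fun u => u ≤ t),
            SPLminus X D u * dN X D u / Yat X u := by
  intro t _
  set s := (times X).filter (fun u => u ≤ t) with hs
  have hfil : ∀ u ∈ s, (times X).filter (fun v => v < u) = s.filter (fun v => v < u) := by
    intro u hu
    have hut : u ≤ t := (Finset.mem_filter.mp hu).2
    rw [hs, Finset.filter_filter]
    apply Finset.filter_congr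
    intro v _
    constructor
    · intro hv; exact ⟨le_trans (le_of_lt hv) hut, hv⟩
    · intro hv; exact hv.2
  have := key_telescope s (fun u => 1 - dN X D u / Yat X u)
  rw [SPL, ← hs, this]
  congr 1
  apply Finset.sum_congr rfl
  intro u hu
  rw [SPLminus, hfil u hu, mul_div_assoc]
  ring

end SurvStmt
end
end

section
/- The value of the failure product-limit estimator at the last observation time satisfies Ŝ_PL(τ) = ΔC(τ)/(n · K̂(τ−)). -/
open Finset
open scoped Classical

noncomputable section

namespace SurvStmt

lemma my_count_split {n : ℕ} (X : Fin n → ℝ) (D : Fin n → Bool) (t : ℝ) :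
    Yat X t = dN X D t + dC X D t + Yplus X t := by
  unfold Yat dN dC Yplus
  rw [← Nat.cast_add, ← Nat.cast_add]
  congr 1
  rw [← Finset.card_union_of_disjoint, ← Finset.card_union_of_disjoint]
  · congr 1
    ext i
    simp only [Finset.mem_union, Finset.mem_filter, Finset.mem_univ, true_and]
    constructor
    · intro h
      rcases eq_or_lt_of_le h with he | hl
      · cases hD : D i
        · exact Or.inl (Or.inr ⟨he.symm, rfl⟩)
        · exact Or.inl (Or.inl ⟨he.symm, rfl⟩)

      · exact Or.inr hl
    · rintro ((⟨he, _⟩ | ⟨he, _⟩) | hl)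
      · exact le_of_eq he.symm
      · exact le_of_eq he.symm
      · exact le_of_lt hl
  · rw [Finset.disjoint_left]
    intro a ha hb
    simp only [Finset.mem_union, Finset.mem_filter, Finset.mem_univ, true_and] at ha hb
    rcases ha with ⟨he, _⟩ | ⟨he, _⟩ <;> exact lt_irrefl t (he ▸ hb)
  · rw [Finset.disjoint_left]
    intro a ha hb
    simp only [Finset.mem_filter, Finset.mem_univ, true_and] at ha hb
    simp [ha.2] at hb

lemma my_dC_nonneg {n : ℕ} (X : Fin n → ℝ) (D : Fin n → Bool) (t : ℝ) :
    0 ≤ dC X D t := Nat.cast_nonneg _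

lemma my_Yat_pos {n : ℕ} (X : Fin n → ℝ) {t : ℝ} (ht : t ∈ times X) : 0 < Yat X t := by
  obtain ⟨i, _, hi⟩ := Finset.mem_image.1 ht
  unfold Yat
  have : i ∈ Finset.univ.filter (fun i => t ≤ X i) := by
    simp [hi.le, hi]
  exact_mod_cast Finset.card_pos.2 ⟨i, this⟩

lemma my_telescope {n : ℕ} (hn : 0 < n) (X : Fin n → ℝ) :
    ∀ t, t ∈ times X →
      ∏ u ∈ (times X).filter (fun u => u < t), (Yplus X u / Yat X u) = Yat X t / n := by
  have hn' : (n : ℝ) ≠ 0 := Nat.cast_ne_zero.2 hn.ne'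
  have key : ∀ k : ℕ, ∀ t, t ∈ times X → ((times X).filter (fun u => u < t)).card = k →
      ∏ u ∈ (times X).filter (fun u => u < t), (Yplus X u / Yat X u) = Yat X t / n := by
    intro k
    induction k using Nat.strong_induction_on with
    | _ k ih =>
      intro t ht hk
      by_cases hemp : ((times X).filter (fun u => u < t)) = ∅
      · rw [hemp, Finset.prod_empty]
        have huniv : (Finset.univ.filter (fun i => t ≤ X i)) = (Finset.univ : Finset (Fin n)) := by
          ext i
          simp only [Finset.mem_filter, Finset.mem_univ, true_and, iff_true]
          by_contra h
          push_neg at h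
          have hXi : X i ∈ (times X).filter (fun u => u < t) := by
            refine Finset.mem_filter.2 ⟨Finset.mem_image_of_mem _ (Finset.mem_univ i), h⟩
          rw [hemp] at hXi
          exact absurd hXi (Finset.notMem_empty _)
        unfold Yat
        rw [huniv, Finset.card_univ, Fintype.card_fin]
        field_simp
      · have hne : ((times X).filter (fun u => u < t)).Nonempty :=
          Finset.nonempty_iff_ne_empty.2 hemp
        obtain ⟨m, hmmem, hmax⟩ :=
          Finset.exists_max_image ((times X).filter (fun u => u < t)) id hne
        have hms : m ∈ times X := (Finset.mem_filter.1 hmmem).1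
        have hmt : m < t := (Finset.mem_filter.1 hmmem).2
        have herase : (times X).filter (fun u => u < m)
            = ((times X).filter (fun u => u < t)).erase m := by
          ext u
          simp only [Finset.mem_filter, Finset.mem_erase]
          constructor
          · rintro ⟨hu, hum⟩
            exact ⟨ne_of_lt hum, hu, hum.trans hmt⟩
          · rintro ⟨hne', hu, hut⟩
            refine ⟨hu, lt_of_le_of_ne ?_ hne'⟩
            exact hmax u (Finset.mem_filter.2 ⟨hu, hut⟩)
        have hcard : ((times X).filter (fun u => u < m)).card < k := by
          rw [herase, ← hk]
          exact Finset.card_erase_lt_of_mem hmmem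
        have IH := ih _ hcard m hms rfl
        rw [← Finset.prod_erase_mul _ _ hmmem, ← herase, IH]
        have hYp : Yplus X m = Yat X t := by
          unfold Yplus Yat
          congr 2
          ext i
          simp only [Finset.mem_filter, Finset.mem_univ, true_and]
          constructor
          · intro h
            by_contra hlt
            push_neg at hlt
            have hXi : X i ∈ (times X).filter (fun u => u < t) :=
              Finset.mem_filter.2 ⟨Finset.mem_image_of_mem _ (Finset.mem_univ i), hlt⟩
            exact absurd (hmax _ hXi) (not_le.2 h)
          · intro h
            exact lt_of_lt_of_le hmt h
        have hYm : Yat X m ≠ 0 := ne_of_gt (my_Yat_pos X hms)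
        rw [hYp]
        field_simp
  intro t ht
  exact key _ t ht rfl

/-- `Ŝ_PL(τ) = ΔC(τ)/(n K̂(τ−))`. -/
theorem stmt14 (n : ℕ) (hn : 0 < n) (X : Fin n → ℝ) (D : Fin n → Bool)
    (hX : ∀ i, 0 < X i) :
    SPL X D (tau X) = dC X D (tau X) / ((n : ℝ) * Kminus X D (tau X)) := by
  have hn' : (n : ℝ) ≠ 0 := Nat.cast_ne_zero.2 hn.ne'
  have hne : (times X).Nonempty :=
    ⟨X ⟨0, hn⟩, Finset.mem_image_of_mem _ (Finset.mem_univ _)⟩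
  have htau_eq : tau X = (times X).max' hne := by
    unfold tau
    rw [← Finset.coe_max' hne]
    rfl
  have hτmem : tau X ∈ times X := htau_eq ▸ Finset.max'_mem _ hne
  have hle : ∀ i, X i ≤ tau X := by
    intro i
    rw [htau_eq]
    exact Finset.le_max' _ _ (Finset.mem_image_of_mem _ (Finset.mem_univ i))
  obtain ⟨i0, _, hi0⟩ := Finset.mem_image.1 hτmem
  -- positivity facts
  have hYτ : 0 < Yat X (tau X) := my_Yat_pos X hτmem
  have hYpτ : Yplus X (tau X) = 0 := by
    unfold Yplus
    have : (Finset.univ.filter (fun i => tau X < X i)) = (∅ : Finset (Fin n)) := by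
      ext i
      simp only [Finset.mem_filter, Finset.mem_univ, true_and, Finset.notMem_empty, iff_false]
      exact not_lt.2 (hle i)
    rw [this]
    simp
  have hYppos : ∀ u ∈ (times X).filter (fun u => u < tau X), 0 < Yplus X u := by
    intro u hu
    have hut : u < tau X := (Finset.mem_filter.1 hu).2
    have hmem : i0 ∈ Finset.univ.filter (fun i => u < X i) := by
      simp [hi0, hut]
    unfold Yplus
    exact_mod_cast Finset.card_pos.2 ⟨i0, hmem⟩
  have hYdagpos : ∀ u ∈ (times X).filter (fun u => u < tau X), 0 < Ydag X D u := by
    intro u hu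
    have hsplit := my_count_split X D u
    unfold Ydag
    have := my_dC_nonneg X D u
    nlinarith [hYppos u hu]
  have hYdag_eq : ∀ u : ℝ, Ydag X D u = dC X D u + Yplus X u := by
    intro u
    have hsplit := my_count_split X D u
    unfold Ydag
    linarith
  -- factor identity on u < τ
  have hfac : ∀ u ∈ (times X).filter (fun u => u < tau X),
      (1 - dN X D u / Yat X u) * (1 - dC X D u / Ydag X D u) = Yplus X u / Yat X u := by
    intro u hu
    have hY : Yat X u ≠ 0 := ne_of_gt (my_Yat_pos X (Finset.mem_filter.1 hu).1)
    have hYd : Ydag X D u ≠ 0 := ne_of_gt (hYdagpos u hu)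
    have hsplit := my_count_split X D u
    have h1 : 1 - dN X D u / Yat X u = Ydag X D u / Yat X u := by
      unfold Ydag
      field_simp
    have h2 : 1 - dC X D u / Ydag X D u = Yplus X u / Ydag X D u := by
      have hd : dC X D u + Yplus X u ≠ 0 := by
        rw [← hYdag_eq u]; exact hYd
      rw [hYdag_eq u, eq_div_iff hd, sub_mul, div_mul_cancel₀ _ hd]
      ring
    rw [h1, h2]
    field_simp
  -- product identity
  have hprod : (∏ u ∈ (times X).filter (fun u => u < tau X), (1 - dN X D u / Yat X u))
      * Kminus X D (tau X) = Yat X (tau X) / n := by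
    unfold Kminus
    rw [← Finset.prod_mul_distrib, Finset.prod_congr rfl hfac]
    exact my_telescope hn X (tau X) hτmem
  -- Kminus positive
  have hKpos : 0 < Kminus X D (tau X) := by
    unfold Kminus
    apply Finset.prod_pos
    intro u hu
    have hYd : 0 < Ydag X D u := hYdagpos u hu
    have h2 : 1 - dC X D u / Ydag X D u = Yplus X u / Ydag X D u := by
      have hd : dC X D u + Yplus X u ≠ 0 := by
        rw [← hYdag_eq u]; exact ne_of_gt hYd
      rw [hYdag_eq u, eq_div_iff hd, sub_mul, div_mul_cancel₀ _ hd]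
      ring
    rw [h2]
    exact div_pos (hYppos u hu) hYd
  -- split SPL at τ
  have hτnot : tau X ∉ (times X).filter (fun u => u < tau X) := by
    intro h
    exact lt_irrefl _ (Finset.mem_filter.1 h).2
  have hins : (times X).filter (fun u => u ≤ tau X)
      = insert (tau X) ((times X).filter (fun u => u < tau X)) := by
    ext u
    simp only [Finset.mem_filter, Finset.mem_insert]
    constructor
    · rintro ⟨hu, hut⟩
      rcases eq_or_lt_of_le hut with he | hl
      · exact Or.inl he
      · exact Or.inr ⟨hu, hl⟩
    · rintro (he | ⟨hu, hl⟩)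
      · exact ⟨he ▸ hτmem, he ▸ le_refl _⟩
      · exact ⟨hu, hl.le⟩
  have hSPL : SPL X D (tau X)
      = (1 - dN X D (tau X) / Yat X (tau X))
        * ∏ u ∈ (times X).filter (fun u => u < tau X), (1 - dN X D u / Yat X u) := by
    unfold SPL
    rw [hins, Finset.prod_insert hτnot]
  -- last factor
  have hlast : 1 - dN X D (tau X) / Yat X (tau X) = dC X D (tau X) / Yat X (tau X) := by
    have hsplit := my_count_split X D (tau X)
    rw [hYpτ] at hsplit
    field_simp
    linarith
  -- finish
  have hK : Kminus X D (tau X) ≠ 0 := ne_of_gt hKpos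
  have hPn : ∏ u ∈ (times X).filter (fun u => u < tau X), (1 - dN X D u / Yat X u)
      = Yat X (tau X) / ((n : ℝ) * Kminus X D (tau X)) := by
    field_simp at hprod ⊢
    linarith [hprod]
  rw [hSPL, hlast, hPn]
  field_simp

end SurvStmt
end
end
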